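/- Let t ≥ 2 and let d = (d_0,…,d_t) be a strictly increasing tuple of integers, and fix an index i with 0 ≤ i ≤ t−2. For ℓ ∈ ℕ let d^ℓ := (d_0,…,d_{t−1}, d_t + ℓ) and let r_ℓ := β_i(π_{d^ℓ})/β_{i+1}(π_{d^ℓ}), where β_j(π_{d^ℓ}) := ∏_{0≤k≤t, k≠j} 1/|d^ℓ_j − d^ℓ_k|. Then the sequence (r_ℓ) is strictly increasing in ℓ, and for every ℓ it satisfies r_ℓ < β_i(π_e)/β_{i+1}(π_e), where e = (d_0,…,d_{t−1},∞) and β_j(π_e) := ∏_{0≤k≤t−1, k≠j} 1/|d_j − d_k|. -/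

import Mathlib

open Finset

/-- The degree sequence `d^ℓ = (d_0, …, d_{t−1}, d_t + ℓ)` obtained from `d` by pushing
the last entry up by `ℓ`. -/
def dSeq {t : ℕ} (d : Fin (t + 1) → ℤ) (ℓ : ℕ) : Fin (t + 1) → ℤ :=
  fun k => if (k : ℕ) = t then d k + (ℓ : ℤ) else d k

/-- The `j`-th Betti number of the pure diagram of the full degree sequence
`(d_0, …, d_t)`: the product over all `k ≠ j` of `1/|d_j − d_k|`. -/
def bettiFull {t : ℕ} (d : Fin (t + 1) → ℤ) (j : Fin (t + 1)) : ℚ :=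
  ∏ k ∈ Finset.univ.filter (fun k => k ≠ j), (1 : ℚ) / |((d j : ℚ) - (d k : ℚ))|

/-- The `j`-th Betti number of the pure diagram of the truncated degree sequence
`(d_0, …, d_{t−1}, ∞)`: the product over all `k ≠ j` with `k ≤ t − 1` of `1/|d_j − d_k|`. -/
def bettiTrunc {t : ℕ} (d : Fin (t + 1) → ℤ) (j : Fin (t + 1)) : ℚ :=
  ∏ k ∈ Finset.univ.filter (fun k => k ≠ j ∧ (k : ℕ) < t),
    (1 : ℚ) / |((d j : ℚ) - (d k : ℚ))|

lemma strictMono_of_hd {t : ℕ} (d : Fin (t + 1) → ℤ)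
    (hd : ∀ j : ℕ, (hj : j + 1 ≤ t) → d ⟨j, Nat.lt_succ_of_le (Nat.le_of_succ_le hj)⟩ + 1 ≤
      d ⟨j + 1, Nat.lt_succ_of_le hj⟩) :
    StrictMono d := by
  rw [Fin.strictMono_iff_lt_succ]
  intro k
  have hk := k.isLt
  have h := hd k hk
  have hcs : Fin.castSucc k = ⟨(k : ℕ), by omega⟩ := rfl
  have hs : Fin.succ k = ⟨(k : ℕ) + 1, by omega⟩ := rfl
  rw [hcs, hs]
  omega

lemma bettiTrunc_pos {t : ℕ} (d : Fin (t + 1) → ℤ) (hinj : Function.Injective d)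
    (j : Fin (t + 1)) : 0 < bettiTrunc d j := by
  apply Finset.prod_pos
  intro k hk
  simp only [Finset.mem_filter] at hk
  have hne : d j ≠ d k := fun h => hk.2.1 (hinj h.symm)
  have : ((d j : ℚ)) - (d k : ℚ) ≠ 0 := sub_ne_zero.mpr (by exact_mod_cast hne)
  exact div_pos one_pos (abs_pos.mpr this)

lemma bettiFull_dSeq {t : ℕ} (d : Fin (t + 1) → ℤ) (ℓ : ℕ) (j : Fin (t + 1))
    (hj : (j : ℕ) < t) (tf : Fin (t + 1)) (htf : (tf : ℕ) = t) :
    bettiFull (dSeq d ℓ) j =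
      bettiTrunc d j * ((1 : ℚ) / |((d j : ℚ) - ((d tf : ℚ) + (ℓ : ℚ)))|) := by
  classical
  have hset : Finset.univ.filter (fun k : Fin (t+1) => k ≠ j) =
      insert tf (Finset.univ.filter (fun k : Fin (t+1) => k ≠ j ∧ (k : ℕ) < t)) := by
    ext k
    have hk := k.isLt
    simp only [Finset.mem_filter, Finset.mem_insert, Finset.mem_univ, true_and,
      Ne, ← Fin.val_eq_val, htf]
    omega
  have htfn : tf ∉ Finset.univ.filter (fun k : Fin (t+1) => k ≠ j ∧ (k : ℕ) < t) := by
    simp [htf]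
  rw [bettiFull, hset, Finset.prod_insert htfn]
  have h1 : dSeq d ℓ j = d j := by simp [dSeq, Nat.ne_of_lt hj]
  have h2 : dSeq d ℓ tf = d tf + (ℓ : ℤ) := by simp [dSeq, htf]
  have h3 : ∀ k ∈ Finset.univ.filter (fun k : Fin (t+1) => k ≠ j ∧ (k : ℕ) < t),
      (1 : ℚ) / |((dSeq d ℓ j : ℚ) - (dSeq d ℓ k : ℚ))| =
      (1 : ℚ) / |((d j : ℚ) - (d k : ℚ))| := by
    intro k hk
    simp only [Finset.mem_filter] at hk
    rw [h1, show dSeq d ℓ k = d k from by simp [dSeq, Nat.ne_of_lt hk.2.2]]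
  rw [Finset.prod_congr rfl h3, h1, h2, mul_comm, bettiTrunc]
  push_cast
  simp only [one_div]

/-- For a strictly increasing integer tuple `d = (d_0, …, d_t)` with `t ≥ 2` and
`0 ≤ i ≤ t − 2`, the ratios `r_ℓ = β_i(π_{d^ℓ})/β_{i+1}(π_{d^ℓ})`, where
`d^ℓ = (d_0,…,d_{t−1},d_t+ℓ)`, form a strictly increasing sequence in `ℓ`, bounded
above by the corresponding ratio for the degree sequence `e = (d_0,…,d_{t−1},∞)`. -/
theorem ratios_strictMono_lt_truncation {t : ℕ} (ht : 2 ≤ t)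
    (d : Fin (t + 1) → ℤ)
    (hd : ∀ j : ℕ, (hj : j + 1 ≤ t) → d ⟨j, by omega⟩ + 1 ≤ d ⟨j + 1, by omega⟩)
    (i : ℕ) (hi : i + 2 ≤ t) :
    StrictMono (fun ℓ : ℕ =>
        bettiFull (dSeq d ℓ) ⟨i, by omega⟩ / bettiFull (dSeq d ℓ) ⟨i + 1, by omega⟩) ∧
    ∀ ℓ : ℕ,
      bettiFull (dSeq d ℓ) ⟨i, by omega⟩ / bettiFull (dSeq d ℓ) ⟨i + 1, by omega⟩ <
        bettiTrunc d ⟨i, by omega⟩ / bettiTrunc d ⟨i + 1, by omega⟩ := by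
  have hit : i < t + 1 := by omega
  have hit1 : i + 1 < t + 1 := by omega
  have htt : t < t + 1 := by omega
  have hmono : StrictMono d := strictMono_of_hd d hd
  set it : Fin (t + 1) := ⟨i, hit⟩ with hitdef
  set it1 : Fin (t + 1) := ⟨i + 1, hit1⟩ with hit1def
  set tf : Fin (t + 1) := ⟨t, htt⟩ with htfdef
  have hab : ((d it : ℚ)) < (d it1 : ℚ) := by
    exact_mod_cast hmono (show it < it1 from by simp [hitdef, hit1def, Fin.mk_lt_mk])
  have hbc : ((d it1 : ℚ)) < (d tf : ℚ) := by
    exact_mod_cast hmono (show it1 < tf from by simp [htfdef, hit1def, Fin.mk_lt_mk]; omega)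
  set a : ℚ := (d it : ℚ)
  set b : ℚ := (d it1 : ℚ)
  set c : ℚ := (d tf : ℚ)
  have hTi : 0 < bettiTrunc d it := bettiTrunc_pos d hmono.injective it
  have hT1 : 0 < bettiTrunc d it1 := bettiTrunc_pos d hmono.injective it1
  have hca : ∀ ℓ : ℕ, a < c + (ℓ : ℚ) := fun ℓ => by
    have : (0:ℚ) ≤ ℓ := Nat.cast_nonneg ℓ
    linarith
  have hcb : ∀ ℓ : ℕ, b < c + (ℓ : ℚ) := fun ℓ => by
    have : (0:ℚ) ≤ ℓ := Nat.cast_nonneg ℓ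
    linarith
  have hratio : ∀ ℓ : ℕ,
      bettiFull (dSeq d ℓ) it / bettiFull (dSeq d ℓ) it1 =
      (bettiTrunc d it / bettiTrunc d it1) * ((c + ℓ - b) / (c + ℓ - a)) := by
    intro ℓ
    rw [bettiFull_dSeq d ℓ it (by simp [hitdef]; omega) tf rfl,
        bettiFull_dSeq d ℓ it1 (by simp [hit1def]; omega) tf rfl]
    have h1 : |a - (c + (ℓ:ℚ))| = c + ℓ - a := by
      rw [abs_sub_comm, abs_of_pos]; linarith [hca ℓ]
    have h2 : |b - (c + (ℓ:ℚ))| = c + ℓ - b := by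
      rw [abs_sub_comm, abs_of_pos]; linarith [hcb ℓ]
    rw [h1, h2]
    have hna : c + (ℓ:ℚ) - a ≠ 0 := by linarith [hca ℓ]
    have hnb : c + (ℓ:ℚ) - b ≠ 0 := by linarith [hcb ℓ]
    field_simp
  have main : StrictMono (fun ℓ : ℕ =>
        bettiFull (dSeq d ℓ) it / bettiFull (dSeq d ℓ) it1) ∧
      ∀ ℓ : ℕ, bettiFull (dSeq d ℓ) it / bettiFull (dSeq d ℓ) it1 <
        bettiTrunc d it / bettiTrunc d it1 := by
    have hTpos : 0 < bettiTrunc d it / bettiTrunc d it1 := div_pos hTi hT1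
    constructor
    · intro m n hmn
      simp only [hratio]
      apply mul_lt_mul_of_pos_left _ hTpos
      rw [div_lt_div_iff₀ (by linarith [hca m]) (by linarith [hca n])]
      have hmn' : (m : ℚ) < n := by exact_mod_cast hmn
      nlinarith [hca m, hca n]
    · intro ℓ
      rw [hratio ℓ]
      have hg : (c + ℓ - b) / (c + ℓ - a) < 1 := by
        rw [div_lt_one (by linarith [hca ℓ])]
        linarith
      calc bettiTrunc d it / bettiTrunc d it1 * ((c + ℓ - b) / (c + ℓ - a))
          < bettiTrunc d it / bettiTrunc d it1 * 1 := by
            exact mul_lt_mul_of_pos_left hg hTpos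
        _ = bettiTrunc d it / bettiTrunc d it1 := mul_one _
  exact main
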